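/- Let r ≥ 3, t ≥ 2^r − r and k ≥ t + r be integers, and let n be an integer satisfying 2k − t − r + 2 ≤ n ≤ ((t+r)/2)^{1/(r−1)}·(k−t−r+2) + t + r − 2. Then |𝓐₁(n,k,r,t)| > C(n−t, k−t); in particular, for such n the maximum size of an r-wise t-intersecting family of k-subsets of [n] exceeds C(n−t, k−t). -/

import Mathlib

open Finset

/-- A family `𝓕` is `r`-wise `t`-intersecting if any `r` (not necessarily distinct)
members have at least `t` common elements. -/
def RwiseIntersecting (r t : ℕ) (𝓕 : Finset (Finset ℕ)) : Prop :=
  ∀ G : Fin r → Finset ℕ, (∀ i, G i ∈ 𝓕) → t ≤ (⋂ i, ((G i : Finset ℕ) : Set ℕ)).ncard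

/-- The Frankl family `𝓐₁(n,k,r,t)`: all `k`-element subsets `A` of `[n]` with
`|A ∩ [t+r]| ≥ t + r - 1`. -/
def franklFamilyOne (n k r t : ℕ) : Finset (Finset ℕ) :=
  (Finset.powersetCard k (Finset.Icc 1 n)).filter
    (fun A => t + r - 1 ≤ (A ∩ Finset.Icc 1 (t + r)).card)

lemma vandermonde_split (m a r : ℕ) (hr : 1 ≤ r) :
    Nat.choose (m + r) (a + r) = Nat.choose m a + r * Nat.choose m (a + 1) +
      ∑ j ∈ Finset.range (r - 1), Nat.choose r (j + 2) * Nat.choose m (a + 2 + j) := by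
  have h1 : (m + r).choose (a + r)
      = ∑ i ∈ range (a + r + 1), m.choose i * r.choose (a + r - i) := by
    rw [Nat.add_choose_eq, Finset.Nat.sum_antidiagonal_eq_sum_range_succ_mk]
  have h2 : a + r + 1 = a + (r + 1) := by omega
  rw [h1, h2, Finset.sum_range_add]
  have h3 : ∑ i ∈ range a, m.choose i * r.choose (a + r - i) = 0 := by
    apply Finset.sum_eq_zero
    intro i hi
    rw [mem_range] at hi
    have : r < a + r - i := by omega
    rw [Nat.choose_eq_zero_of_lt this, mul_zero]
  rw [h3, zero_add]
  have h4 : ∀ j ∈ range (r + 1), m.choose (a + j) * r.choose (a + r - (a + j))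
      = m.choose (a + j) * r.choose j := by
    intro j hj
    rw [mem_range] at hj
    have : a + r - (a + j) = r - j := by omega
    rw [this, Nat.choose_symm (by omega)]
  rw [Finset.sum_congr rfl h4]
  have h5 : r + 1 = (r - 1) + 1 + 1 := by omega
  rw [h5, Finset.sum_range_succ', Finset.sum_range_succ']
  have e0 : m.choose (a + 0) * r.choose 0 = m.choose a := by simp
  have e1 : m.choose (a + (0 + 1)) * r.choose (0 + 1) = m.choose (a + 1) * r := by simp
  rw [e0, e1]
  have : ∀ j, m.choose (a + (j + 1 + 1)) * r.choose (j + 1 + 1)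
      = r.choose (j + 2) * m.choose (a + 2 + j) := by
    intro j
    rw [mul_comm]
    congr 2 <;> omega
  simp only [this]
  ring

lemma key_sum_lt (r t m a : ℕ) (c : ℝ) (hr : 3 ≤ r) (hc : 2 ≤ c)
    (hcr : c ^ (r - 1) = ((t : ℝ) + r) / 2)
    (hm : 2 * a + 2 ≤ m)
    (hmc : (m : ℝ) + 2 ≤ c * ((a : ℝ) + 2)) :
    ∑ j ∈ Finset.range (r - 1), Nat.choose r (j + 2) * Nat.choose m (a + 2 + j)
      < t * Nat.choose m (a + 1) := by
  set ρ : ℝ := ((m : ℝ) - a - 1) / ((a : ℝ) + 2) with hρdef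
  set d : ℝ := c - 1 with hddef
  have hd1 : (1 : ℝ) ≤ d := by simp [hddef]; linarith
  have hd0 : (0 : ℝ) < d := by linarith
  have ha2 : (0 : ℝ) < (a : ℝ) + 2 := by positivity
  have hma : (0 : ℝ) ≤ (m : ℝ) - a - 1 := by
    have : (2 * a + 2 : ℝ) ≤ m := by exact_mod_cast hm
    linarith
  have hρ0 : 0 ≤ ρ := div_nonneg hma (le_of_lt ha2)
  have hρd : ρ ≤ d := by
    rw [hρdef, div_le_iff₀ ha2]
    nlinarith
  -- ratio step
  have hstep : ∀ s : ℕ, a + 1 ≤ s → (Nat.choose m (s + 1) : ℝ) ≤ Nat.choose m s * ρ := by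
    intro s hs
    have hid : (Nat.choose m (s + 1) : ℝ) * (s + 1) = Nat.choose m s * ((m - s : ℕ) : ℝ) := by
      exact_mod_cast congrArg (Nat.cast : ℕ → ℝ) (Nat.choose_succ_right_eq m s)
    have hs1 : (0 : ℝ) < (s : ℝ) + 1 := by positivity
    have hnum : ((m - s : ℕ) : ℝ) ≤ (m : ℝ) - a - 1 := by
      have h1 : m - s ≤ m - (a + 1) := Nat.sub_le_sub_left hs m
      have h2 : ((m - (a + 1) : ℕ) : ℝ) = (m : ℝ) - a - 1 := by
        have : a + 1 ≤ m := by omega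
        push_cast [Nat.cast_sub this]
        ring
      calc ((m - s : ℕ) : ℝ) ≤ ((m - (a + 1) : ℕ) : ℝ) := by exact_mod_cast h1
        _ = (m : ℝ) - a - 1 := h2
    have hratio : ((m - s : ℕ) : ℝ) / ((s : ℝ) + 1) ≤ ρ := by
      rw [hρdef]
      apply div_le_div₀ hma hnum ha2
      have : a + 2 ≤ s + 1 := by omega
      exact_mod_cast this
    have hcs : (0 : ℝ) ≤ (Nat.choose m s : ℝ) := by positivity
    have heq : (Nat.choose m (s + 1) : ℝ)
        = (Nat.choose m s : ℝ) * (((m - s : ℕ) : ℝ) / ((s : ℝ) + 1)) := by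
      field_simp
      linarith [hid]
    rw [heq]
    exact mul_le_mul_of_nonneg_left hratio hcs
  have hbound : ∀ j : ℕ, (Nat.choose m (a + 2 + j) : ℝ) ≤ Nat.choose m (a + 1) * ρ ^ (j + 1) := by
    intro j
    induction j with
    | zero =>
      have := hstep (a + 1) le_rfl
      simpa [pow_one, show a + 2 = a + 1 + 1 by ring] using this
    | succ j ih =>
      have h1 : (Nat.choose m (a + 2 + (j + 1)) : ℝ) ≤ Nat.choose m (a + 2 + j) * ρ := by
        have := hstep (a + 2 + j) (by omega)
        simpa [show a + 2 + (j + 1) = a + 2 + j + 1 by ring] using this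
      calc (Nat.choose m (a + 2 + (j + 1)) : ℝ) ≤ Nat.choose m (a + 2 + j) * ρ := h1
        _ ≤ (Nat.choose m (a + 1) * ρ ^ (j + 1)) * ρ := by
            apply mul_le_mul_of_nonneg_right ih hρ0
        _ = Nat.choose m (a + 1) * ρ ^ (j + 1 + 1) := by ring
  -- binomial expansion of (d+1)^r
  have hbinom : (d + 1) ^ r = 1 + r * d + ∑ j ∈ range (r - 1), (Nat.choose r (j + 2) : ℝ) * d ^ (j + 2) := by
    rw [add_pow]
    simp only [one_pow, mul_one]
    have h5 : r + 1 = (r - 1) + 1 + 1 := by omega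
    rw [h5, Finset.sum_range_succ', Finset.sum_range_succ']
    have e0 : d ^ 0 * ((Nat.choose r 0 : ℕ) : ℝ) = 1 := by simp
    have e1 : d ^ (0 + 1) * ((Nat.choose r (0 + 1) : ℕ) : ℝ) = r * d := by simp [mul_comm]
    rw [e0, e1]
    have : ∀ j, d ^ (j + 1 + 1) * ((Nat.choose r (j + 1 + 1) : ℕ) : ℝ)
        = (Nat.choose r (j + 2) : ℝ) * d ^ (j + 2) := by
      intro j; rw [mul_comm]
    simp only [this]
    ring
  have hcr' : (d + 1) ^ r = c * (((t : ℝ) + r) / 2) := by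
    have h1 : d + 1 = c := by rw [hddef]; ring
    rw [h1]
    have h2 : c ^ r = c ^ (r - 1) * c := by
      conv_lhs => rw [show r = (r - 1) + 1 by omega]
      rw [pow_succ]
    rw [h2, hcr]; ring
  -- the key sum in ℝ
  have hsum : (∑ j ∈ range (r - 1), (Nat.choose r (j + 2) : ℝ) * Nat.choose m (a + 2 + j)) * d
      ≤ (Nat.choose m (a + 1) : ℝ) * ∑ j ∈ range (r - 1), (Nat.choose r (j + 2) : ℝ) * d ^ (j + 2) := by
    rw [Finset.sum_mul, Finset.mul_sum]
    apply Finset.sum_le_sum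
    intro j _
    have h1 : (Nat.choose m (a + 2 + j) : ℝ) ≤ Nat.choose m (a + 1) * ρ ^ (j + 1) := hbound j
    have h2 : ρ ^ (j + 1) ≤ d ^ (j + 1) := pow_le_pow_left₀ hρ0 hρd (j + 1)
    have hc0 : (0 : ℝ) ≤ (Nat.choose r (j + 2) : ℝ) := by positivity
    have hc1 : (0 : ℝ) ≤ (Nat.choose m (a + 1) : ℝ) := by positivity
    calc (Nat.choose r (j + 2) : ℝ) * Nat.choose m (a + 2 + j) * d
        ≤ (Nat.choose r (j + 2) : ℝ) * (Nat.choose m (a + 1) * ρ ^ (j + 1)) * d := by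
          apply mul_le_mul_of_nonneg_right _ (le_of_lt hd0)
          exact mul_le_mul_of_nonneg_left h1 hc0
      _ ≤ (Nat.choose r (j + 2) : ℝ) * (Nat.choose m (a + 1) * d ^ (j + 1)) * d := by
          apply mul_le_mul_of_nonneg_right _ (le_of_lt hd0)
          apply mul_le_mul_of_nonneg_left _ hc0
          exact mul_le_mul_of_nonneg_left h2 hc1
      _ = (Nat.choose m (a + 1) : ℝ) * ((Nat.choose r (j + 2) : ℝ) * d ^ (j + 2)) := by ring
  have hsumval : ∑ j ∈ range (r - 1), (Nat.choose r (j + 2) : ℝ) * d ^ (j + 2)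
      = c * (((t : ℝ) + r) / 2) - 1 - r * d := by
    have := hbinom
    rw [hcr'] at this
    linarith
  have htr0 : (0 : ℝ) ≤ (t : ℝ) + r := by positivity
  have hfinal : c * (((t : ℝ) + r) / 2) - 1 - r * d < t * d := by
    have h1 : c * (((t : ℝ) + r) / 2) ≤ ((t : ℝ) + r) * d := by
      rw [hddef]
      nlinarith
    nlinarith
  have hchoosepos : (0 : ℝ) < (Nat.choose m (a + 1) : ℝ) := by
    have : 0 < Nat.choose m (a + 1) := Nat.choose_pos (by omega)
    exact_mod_cast this
  have hmain : (∑ j ∈ range (r - 1), (Nat.choose r (j + 2) : ℝ) * Nat.choose m (a + 2 + j)) * d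
      < ((t : ℝ) * Nat.choose m (a + 1)) * d := by
    calc (∑ j ∈ range (r - 1), (Nat.choose r (j + 2) : ℝ) * Nat.choose m (a + 2 + j)) * d
        ≤ (Nat.choose m (a + 1) : ℝ) * (c * (((t : ℝ) + r) / 2) - 1 - r * d) := by
          rw [← hsumval]; exact hsum
      _ < (Nat.choose m (a + 1) : ℝ) * (t * d) := by
          exact mul_lt_mul_of_pos_left hfinal hchoosepos
      _ = ((t : ℝ) * Nat.choose m (a + 1)) * d := by ring
  have hreal : (∑ j ∈ range (r - 1), (Nat.choose r (j + 2) : ℝ) * Nat.choose m (a + 2 + j))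
      < (t : ℝ) * Nat.choose m (a + 1) := lt_of_mul_lt_mul_right hmain (le_of_lt hd0)
  exact_mod_cast hreal

lemma card_frankl_ge (n k r t m a : ℕ) (hr : 1 ≤ r)
    (hn : n = m + (t + r)) (hk : k = a + (t + r)) :
    Nat.choose m a + (t + r) * Nat.choose m (a + 1) ≤ (franklFamilyOne n k r t).card := by
  set T : Finset ℕ := Finset.Icc 1 (t + r) with hT
  set U : Finset ℕ := Finset.Icc (t + r + 1) n with hU
  have hTcard : T.card = t + r := by simp [hT]
  have hUcard : U.card = m := by
    rw [hU, Nat.card_Icc]; omega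
  have hdisj : ∀ B ⊆ U, Disjoint T B := by
    intro B hB
    apply Finset.disjoint_left.mpr
    intro x hxT hxB
    have h1 : x ≤ t + r := (Finset.mem_Icc.mp hxT).2
    have h2 : t + r + 1 ≤ x := (Finset.mem_Icc.mp (hB hxB)).1
    omega
  have hTsub : T ⊆ Finset.Icc 1 n := by
    apply Finset.Icc_subset_Icc le_rfl; omega
  have hUsub : U ⊆ Finset.Icc 1 n := by
    apply Finset.Icc_subset_Icc (by omega) le_rfl
  set F0 : Finset (Finset ℕ) := (Finset.powersetCard a U).image (fun B => T ∪ B) with hF0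
  set F1 : Finset (Finset ℕ) :=
    T.biUnion (fun x => (Finset.powersetCard (a + 1) U).image (fun B => (T.erase x) ∪ B)) with hF1
  -- recover B from union
  have hrec : ∀ (S : Finset ℕ), S ⊆ T → ∀ B ⊆ U, (S ∪ B) \ T = B := by
    intro S hS B hB
    have hd : Disjoint B T := (hdisj B hB).symm
    rw [Finset.union_sdiff_distrib, Finset.sdiff_eq_empty_iff_subset.mpr hS,
      Finset.empty_union, hd.sdiff_eq_left]
  have hF0card : F0.card = Nat.choose m a := by
    rw [hF0, Finset.card_image_of_injOn, Finset.card_powersetCard, hUcard]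
    intro B hB B' hB' hEq
    simp only [Finset.mem_coe, Finset.mem_powersetCard] at hB hB'
    have hEq' : T ∪ B = T ∪ B' := hEq
    have h1 := hrec T (le_refl T) B hB.1
    have h2 := hrec T (le_refl T) B' hB'.1
    rw [← h1, ← h2, hEq']
  have hF1card : F1.card = (t + r) * Nat.choose m (a + 1) := by
    rw [hF1, Finset.card_biUnion, ← hTcard]
    · rw [Finset.card_eq_sum_ones T, Finset.sum_mul, one_mul]
      apply Finset.sum_congr rfl
      intro x hx
      rw [Finset.card_image_of_injOn, Finset.card_powersetCard, hUcard]
      intro B hB B' hB' hEq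
      simp only [Finset.mem_coe, Finset.mem_powersetCard] at hB hB'
      have hEq' : T.erase x ∪ B = T.erase x ∪ B' := hEq
      have h1 := hrec (T.erase x) (Finset.erase_subset x T) B hB.1
      have h2 := hrec (T.erase x) (Finset.erase_subset x T) B' hB'.1
      rw [← h1, ← h2, hEq']
    · intro x hx y hy hxy
      apply Finset.disjoint_left.mpr
      intro A hAx hAy
      simp only [Finset.mem_image, Finset.mem_powersetCard] at hAx hAy
      obtain ⟨B, hB, hEB⟩ := hAx
      obtain ⟨B', hB', hEB'⟩ := hAy
      have hxT' : x ∈ T.erase y := Finset.mem_erase.mpr ⟨hxy, hx⟩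
      have hxA : x ∈ A := by
        rw [← hEB']
        exact Finset.mem_union_left B' hxT'
      rw [← hEB] at hxA
      rcases Finset.mem_union.mp hxA with h | h
      · exact (Finset.mem_erase.mp h).1 rfl
      · have h1 := (Finset.mem_Icc.mp (hB.1 h)).1
        have h2 := (Finset.mem_Icc.mp hx).2
        omega
  have hF0sub : F0 ⊆ franklFamilyOne n k r t := by
    intro A hA
    rw [hF0, Finset.mem_image] at hA
    obtain ⟨B, hB, rfl⟩ := hA
    rw [Finset.mem_powersetCard] at hB
    rw [franklFamilyOne, Finset.mem_filter, Finset.mem_powersetCard]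
    refine ⟨⟨Finset.union_subset hTsub (hB.1.trans hUsub), ?_⟩, ?_⟩
    · rw [Finset.card_union_of_disjoint (hdisj B hB.1), hTcard, hB.2]; omega
    · have : (T ∪ B) ∩ T = T := by
        apply Finset.inter_eq_right.mpr Finset.subset_union_left
      rw [this, hTcard]; omega
  have hF1sub : F1 ⊆ franklFamilyOne n k r t := by
    intro A hA
    rw [hF1, Finset.mem_biUnion] at hA
    obtain ⟨x, hx, hA⟩ := hA
    rw [Finset.mem_image] at hA
    obtain ⟨B, hB, rfl⟩ := hA
    rw [Finset.mem_powersetCard] at hB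
    have herase : (T.erase x).card = t + r - 1 := by
      rw [Finset.card_erase_of_mem hx, hTcard]
    rw [franklFamilyOne, Finset.mem_filter, Finset.mem_powersetCard]
    have hdisj' : Disjoint (T.erase x) B :=
      Finset.disjoint_of_subset_left (Finset.erase_subset x T) (hdisj B hB.1)
    refine ⟨⟨Finset.union_subset ((Finset.erase_subset x T).trans hTsub)
        (hB.1.trans hUsub), ?_⟩, ?_⟩
    · rw [Finset.card_union_of_disjoint hdisj', herase, hB.2]; omega
    · have : (T.erase x ∪ B) ∩ T = T.erase x := by
        rw [Finset.union_inter_distrib_right]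
        rw [Finset.inter_eq_left.mpr (Finset.erase_subset x T)]
        rw [Finset.disjoint_iff_inter_eq_empty.mp (hdisj B hB.1).symm]
        rw [Finset.union_empty]
      rw [this, herase]
  have hdisjF : Disjoint F0 F1 := by
    apply Finset.disjoint_left.mpr
    intro A hA0 hA1
    rw [hF0, Finset.mem_image] at hA0
    obtain ⟨B, hB, rfl⟩ := hA0
    rw [Finset.mem_powersetCard] at hB
    rw [hF1, Finset.mem_biUnion] at hA1
    obtain ⟨x, hx, hA1⟩ := hA1
    rw [Finset.mem_image] at hA1
    obtain ⟨B', hB', hEq⟩ := hA1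
    rw [Finset.mem_powersetCard] at hB'
    have hxA : x ∈ T ∪ B := Finset.mem_union_left B hx
    rw [← hEq] at hxA
    rcases Finset.mem_union.mp hxA with h | h
    · exact (Finset.mem_erase.mp h).1 rfl
    · have h1 := (Finset.mem_Icc.mp (hB'.1 h)).1
      have h2 := (Finset.mem_Icc.mp hx).2
      omega
  calc Nat.choose m a + (t + r) * Nat.choose m (a + 1)
      = F0.card + F1.card := by rw [hF0card, hF1card]
    _ = (F0 ∪ F1).card := (Finset.card_union_of_disjoint hdisjF).symm
    _ ≤ (franklFamilyOne n k r t).card :=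
        Finset.card_le_card (Finset.union_subset hF0sub hF1sub)

lemma frankl_rwise (n k r t : ℕ) (hr : 1 ≤ r) :
    RwiseIntersecting r t (franklFamilyOne n k r t) := by
  intro G hG
  set T : Finset ℕ := Finset.Icc 1 (t + r) with hT
  have hTcard : T.card = t + r := by simp [hT]
  have key : ∀ i, (T \ G i).card ≤ 1 := by
    intro i
    have hGi := (Finset.mem_filter.mp (hG i)).2
    have h1 : (T \ G i).card + (T ∩ G i).card = T.card :=
      Finset.card_sdiff_add_card_inter T (G i)
    have h2 : (G i ∩ Finset.Icc 1 (t + r)).card = (T ∩ G i).card := by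
      rw [← hT, Finset.inter_comm]
    omega
  set D : Finset ℕ := Finset.univ.biUnion (fun i : Fin r => T \ G i) with hD
  have hDcard : D.card ≤ r := by
    calc D.card ≤ ∑ i : Fin r, (T \ G i).card := Finset.card_biUnion_le
      _ ≤ ∑ _i : Fin r, 1 := Finset.sum_le_sum (fun i _ => key i)
      _ = r := by simp
  have hsub : ∀ i, (T \ D) ⊆ G i := by
    intro i x hx
    rw [Finset.mem_sdiff] at hx
    by_contra hxG
    apply hx.2
    rw [hD, Finset.mem_biUnion]
    exact ⟨i, Finset.mem_univ i, Finset.mem_sdiff.mpr ⟨hx.1, hxG⟩⟩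
  have hsub' : ((T \ D : Finset ℕ) : Set ℕ) ⊆ ⋂ i, ((G i : Finset ℕ) : Set ℕ) := by
    apply Set.subset_iInter
    intro i x hx
    exact hsub i hx
  have i0 : Fin r := ⟨0, by omega⟩
  have hfin : (⋂ i, ((G i : Finset ℕ) : Set ℕ)).Finite :=
    Set.Finite.subset (G i0).finite_toSet (Set.iInter_subset _ i0)
  calc t ≤ T.card - D.card := by omega
    _ ≤ (T \ D).card := Finset.le_card_sdiff D T
    _ = ((T \ D : Finset ℕ) : Set ℕ).ncard := (Set.ncard_coe_finset _).symm
    _ ≤ (⋂ i, ((G i : Finset ℕ) : Set ℕ)).ncard := Set.ncard_le_ncard hsub' hfin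

theorem franklFamilyOne_card_gt
    (r t k n : ℕ) (hr : 3 ≤ r) (ht : 2 ^ r - r ≤ t) (hk : t + r ≤ k)
    (hn1 : 2 * (k : ℝ) - (t : ℝ) - (r : ℝ) + 2 ≤ (n : ℝ))
    (hn2 : (n : ℝ) ≤ (((t : ℝ) + (r : ℝ)) / 2) ^ ((1 : ℝ) / ((r : ℝ) - 1)) *
      ((k : ℝ) - (t : ℝ) - (r : ℝ) + 2) + (t : ℝ) + (r : ℝ) - 2) :
    Nat.choose (n - t) (k - t) < (franklFamilyOne n k r t).card ∧
    ∃ 𝓕 ⊆ Finset.powersetCard k (Finset.Icc 1 n),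
      RwiseIntersecting r t 𝓕 ∧ Nat.choose (n - t) (k - t) < 𝓕.card := by
  have h2r : r < 2 ^ r := Nat.lt_two_pow_self
  have htr : 2 ^ r ≤ t + r := by omega
  -- basic integer consequences of hn1
  have hn1' : 2 * k + 2 ≤ n + t + r := by
    have : (2 * k + 2 : ℝ) ≤ (n : ℝ) + t + r := by linarith
    exact_mod_cast this
  set m : ℕ := n - (t + r) with hmdef
  set a : ℕ := k - (t + r) with hadef
  have hn : n = m + (t + r) := by omega
  have hka : k = a + (t + r) := by omega
  have hm : 2 * a + 2 ≤ m := by omega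
  -- the real constant c
  set c : ℝ := (((t : ℝ) + (r : ℝ)) / 2) ^ ((1 : ℝ) / ((r : ℝ) - 1)) with hcdef
  have hx0 : (0 : ℝ) ≤ ((t : ℝ) + r) / 2 := by positivity
  have hr3 : (3 : ℝ) ≤ (r : ℝ) := by exact_mod_cast hr
  have hrr : ((r : ℝ) - 1) ≠ 0 := by linarith
  have hcast : ((r - 1 : ℕ) : ℝ) = (r : ℝ) - 1 := by
    rw [Nat.cast_sub (by omega)]; simp
  have hcr : c ^ (r - 1) = ((t : ℝ) + r) / 2 := by
    rw [hcdef, ← Real.rpow_natCast _ (r - 1), hcast, ← Real.rpow_mul hx0]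
    rw [one_div, inv_mul_cancel₀ hrr, Real.rpow_one]
  have hc2 : (2 : ℝ) ≤ c := by
    have e1 : (2 : ℝ) ^ ((r : ℝ) - 1) = (2 : ℝ) ^ (r : ℝ) / 2 := by
      rw [Real.rpow_sub (by norm_num), Real.rpow_one]
    have e2 : (2 : ℝ) ^ ((r : ℕ) : ℝ) = ((2 ^ r : ℕ) : ℝ) := by
      rw [Real.rpow_natCast]; push_cast; ring
    have h2x : (2 : ℝ) ^ ((r : ℝ) - 1) ≤ ((t : ℝ) + r) / 2 := by
      rw [e1, e2]
      have : ((2 ^ r : ℕ) : ℝ) ≤ (t : ℝ) + r := by exact_mod_cast htr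
      linarith
    have he : (0 : ℝ) ≤ (1 : ℝ) / ((r : ℝ) - 1) := div_nonneg zero_le_one (by linarith)
    have h3 : ((2 : ℝ) ^ ((r : ℝ) - 1)) ^ ((1 : ℝ) / ((r : ℝ) - 1)) ≤ c := by
      rw [hcdef]
      exact Real.rpow_le_rpow (Real.rpow_nonneg (by norm_num) _) h2x he
    have h4 : ((2 : ℝ) ^ ((r : ℝ) - 1)) ^ ((1 : ℝ) / ((r : ℝ) - 1)) = 2 := by
      rw [← Real.rpow_mul (by norm_num), mul_one_div, div_self hrr, Real.rpow_one]
    linarith [h3, h4.symm.le]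
  have hnc : (n : ℝ) = (m : ℝ) + t + r := by rw [hn]; push_cast; ring
  have hkc : (k : ℝ) = (a : ℝ) + t + r := by rw [hka]; push_cast; ring
  have hmc : (m : ℝ) + 2 ≤ c * ((a : ℝ) + 2) := by
    have hk2 : (k : ℝ) - t - r + 2 = (a : ℝ) + 2 := by rw [hkc]; ring
    rw [hk2, hnc] at hn2
    linarith
  have hsum := key_sum_lt r t m a c hr hc2 hcr hm hmc
  have hcard := card_frankl_ge n k r t m a (by omega) hn hka
  have hnt : n - t = m + r := by omega
  have hkt : k - t = a + r := by omega
  have hmain : Nat.choose (n - t) (k - t) < (franklFamilyOne n k r t).card := by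
    rw [hnt, hkt, vandermonde_split m a r (by omega)]
    have hP : (t + r) * Nat.choose m (a + 1)
        = t * Nat.choose m (a + 1) + r * Nat.choose m (a + 1) := by ring
    omega
  exact ⟨hmain, franklFamilyOne n k r t, Finset.filter_subset _ _,
    frankl_rwise n k r t (by omega), hmain⟩
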